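/- Let (y, x) and (y', x') be i.i.d. pairs with y = xᵀβ* + ε, y' = x'ᵀβ* + ε', where ε, ε' are i.i.d., independent of (x, x'), with E|ε| < ∞, E‖x‖ < ∞, and Σ = Cov(x − x') positive definite. Define ℒ_h(β) = E[L_h(y − y' − (x − x')ᵀβ)]. Then β* is a global minimizer of ℒ_h for every h > 0, i.e., ∇ℒ_h(β*) = 0 and ℒ_h is convex. -/
import Mathlib

open MeasureTheory Filter Real ProbabilityTheory
open scoped Topology RealInnerProductSpace

noncomputable def gAux (K : ℝ → ℝ) (h : ℝ) (r : ℝ) : ℝ := ∫ v, |r - v| * (K (v / h) / h)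
noncomputable def FAux (K : ℝ → ℝ) (h : ℝ) (x : ℝ) : ℝ := ∫ v in (0:ℝ)..x, K (v / h) / h

variable {K : ℝ → ℝ} {h : ℝ}

lemma KhMeas (hMeas : Measurable K) : Measurable (fun v => K (v / h) / h) :=
  (hMeas.comp (measurable_id.div_const h)).div_const h

lemma KhInt (hIntK : Integrable K) (hh : 0 < h) :
    Integrable (fun v => K (v / h) / h) :=
  (hIntK.comp_div hh.ne').div_const h

lemma KhInt1 (hIntK : Integrable K) (hK1 : (∫ t, K t) = 1) (hh : 0 < h) :
    (∫ v, K (v / h) / h) = 1 := by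
  rw [integral_div, MeasureTheory.Measure.integral_comp_div K h, smul_eq_mul,
    abs_of_pos hh, hK1]
  field_simp

lemma KhMom (hKmom : Integrable (fun t => |t| * K t)) (hh : 0 < h) :
    Integrable (fun v => |v| * (K (v / h) / h)) := by
  have : (fun v => |v| * (K (v / h) / h)) = fun v => |v / h| * K (v / h) := by
    funext v
    rw [abs_div, abs_of_pos hh]
    field_simp
  rw [this]
  exact hKmom.comp_div hh.ne'

lemma absIntAux (hMeas : Measurable K) (hK0 : ∀ t, 0 ≤ K t) (hIntK : Integrable K)
    (hKmom : Integrable (fun t => |t| * K t)) (hh : 0 < h) (r : ℝ) :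
    Integrable (fun v => |r - v| * (K (v / h) / h)) := by
  refine Integrable.mono' (((KhInt hIntK hh).const_mul |r|).add (KhMom hKmom hh))
    (((measurable_const.sub measurable_id).abs.mul (KhMeas hMeas)).aestronglyMeasurable) ?_
  filter_upwards with v
  have h0 : 0 ≤ K (v / h) / h := div_nonneg (hK0 _) hh.le
  rw [Real.norm_eq_abs, abs_mul, abs_of_nonneg h0, abs_abs]
  have : |r - v| ≤ |r| + |v| := (abs_sub r v)
  simp only [Pi.add_apply]
  nlinarith

lemma gAux_nonneg (hK0 : ∀ t, 0 ≤ K t) (hh : 0 < h) (r : ℝ) : 0 ≤ gAux K h r :=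
  integral_nonneg fun v => mul_nonneg (abs_nonneg _) (div_nonneg (hK0 _) hh.le)

lemma gAux_le (hMeas : Measurable K) (hK0 : ∀ t, 0 ≤ K t) (hIntK : Integrable K)
    (hK1 : (∫ t, K t) = 1) (hKmom : Integrable (fun t => |t| * K t)) (hh : 0 < h) (r : ℝ) :
    gAux K h r ≤ |r| + ∫ v, |v| * (K (v / h) / h) := by
  have h1 : gAux K h r ≤ ∫ v, (|r| * (K (v / h) / h) + |v| * (K (v / h) / h)) := by
    refine integral_mono (absIntAux hMeas hK0 hIntK hKmom hh r)
      (((KhInt hIntK hh).const_mul _).add (KhMom hKmom hh)) fun v => ?_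
    have h0 : 0 ≤ K (v / h) / h := div_nonneg (hK0 _) hh.le
    have : |r - v| ≤ |r| + |v| := (abs_sub r v)
    nlinarith
  rw [integral_add ((KhInt hIntK hh).const_mul _) (KhMom hKmom hh),
    integral_const_mul, KhInt1 hIntK hK1 hh, mul_one] at h1
  exact h1

lemma gAux_lip (hMeas : Measurable K) (hK0 : ∀ t, 0 ≤ K t) (hIntK : Integrable K)
    (hK1 : (∫ t, K t) = 1) (hKmom : Integrable (fun t => |t| * K t)) (hh : 0 < h)
    (r₁ r₂ : ℝ) : |gAux K h r₁ - gAux K h r₂| ≤ |r₁ - r₂| := by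
  have hint := absIntAux hMeas hK0 hIntK hKmom hh
  have h1 : gAux K h r₁ - gAux K h r₂
      = ∫ v, (|r₁ - v| * (K (v / h) / h) - |r₂ - v| * (K (v / h) / h)) := by
    rw [integral_sub (hint r₁) (hint r₂)]; rfl
  rw [h1]
  calc |∫ v, (|r₁ - v| * (K (v / h) / h) - |r₂ - v| * (K (v / h) / h))|
      ≤ ∫ v, |r₁ - r₂| * (K (v / h) / h) := by
        rw [← Real.norm_eq_abs]
        refine (norm_integral_le_integral_norm _).trans ?_
        refine integral_mono ((hint r₁).sub (hint r₂)).norm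
          ((KhInt hIntK hh).const_mul _) fun v => ?_
        have h0 : 0 ≤ K (v / h) / h := div_nonneg (hK0 _) hh.le
        rw [Real.norm_eq_abs, ← sub_mul, abs_mul, abs_of_nonneg h0]
        have := abs_abs_sub_abs_le_abs_sub (r₁ - v) (r₂ - v)
        simp only [sub_sub_sub_cancel_right] at this
        nlinarith
    _ = |r₁ - r₂| := by rw [integral_const_mul, KhInt1 hIntK hK1 hh, mul_one]

lemma gAux_cont (hMeas : Measurable K) (hK0 : ∀ t, 0 ≤ K t) (hIntK : Integrable K)
    (hK1 : (∫ t, K t) = 1) (hKmom : Integrable (fun t => |t| * K t)) (hh : 0 < h) :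
    Continuous (gAux K h) := by
  refine (LipschitzWith.of_dist_le_mul (K := 1) fun r₁ r₂ => ?_).continuous
  rw [Real.dist_eq, Real.dist_eq, NNReal.coe_one, one_mul]
  exact gAux_lip hMeas hK0 hIntK hK1 hKmom hh r₁ r₂

lemma gAux_even (hsym : ∀ t, K (-t) = K t) (r : ℝ) : gAux K h (-r) = gAux K h r := by
  have h1 : gAux K h (-r) = ∫ v, |(-r) - (-v)| * (K ((-v) / h) / h) := by
    rw [← MeasureTheory.integral_neg_eq_self (fun v => |(-r) - (-v)| * (K ((-v) / h) / h))]
    simp only [neg_neg]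
    rfl
  rw [h1]
  unfold gAux
  congr 1
  funext v
  rw [neg_div, hsym]
  congr 1
  rw [show -r - -v = -(r - v) by ring, abs_neg]

lemma gAux_conv (hMeas : Measurable K) (hK0 : ∀ t, 0 ≤ K t) (hIntK : Integrable K)
    (hKmom : Integrable (fun t => |t| * K t)) (hh : 0 < h)
    (r₁ r₂ a b : ℝ) (ha : 0 ≤ a) (hb : 0 ≤ b) (hab : a + b = 1) :
    gAux K h (a * r₁ + b * r₂) ≤ a * gAux K h r₁ + b * gAux K h r₂ := by
  have hint := absIntAux hMeas hK0 hIntK hKmom hh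
  have h1 : gAux K h (a * r₁ + b * r₂)
      ≤ ∫ v, (a * (|r₁ - v| * (K (v / h) / h)) + b * (|r₂ - v| * (K (v / h) / h))) := by
    refine integral_mono (hint _) (((hint r₁).const_mul a).add ((hint r₂).const_mul b))
      fun v => ?_
    have h0 : 0 ≤ K (v / h) / h := div_nonneg (hK0 _) hh.le
    have key : |a * r₁ + b * r₂ - v| ≤ a * |r₁ - v| + b * |r₂ - v| := by
      have he : a * r₁ + b * r₂ - v = a * (r₁ - v) + b * (r₂ - v) := by
        linear_combination v * hab
      rw [he]
      calc |a * (r₁ - v) + b * (r₂ - v)| ≤ |a * (r₁ - v)| + |b * (r₂ - v)| := abs_add_le _ _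
        _ = a * |r₁ - v| + b * |r₂ - v| := by
            rw [abs_mul, abs_mul, abs_of_nonneg ha, abs_of_nonneg hb]
    simp only [Pi.add_apply]; nlinarith
  rw [integral_add ((hint r₁).const_mul a) ((hint r₂).const_mul b),
    integral_const_mul, integral_const_mul] at h1
  exact h1

lemma FAux_cont (hIntK : Integrable K) (hh : 0 < h) : Continuous (FAux K h) :=
  (KhInt hIntK hh).continuous_primitive 0

lemma FAux_bound (hK0 : ∀ t, 0 ≤ K t) (hIntK : Integrable K) (hK1 : (∫ t, K t) = 1)
    (hh : 0 < h) (a b : ℝ) : |FAux K h b - FAux K h a| ≤ 1 := by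
  have hii : ∀ c d : ℝ, IntervalIntegrable (fun v => K (v / h) / h) volume c d :=
    fun c d => (KhInt hIntK hh).intervalIntegrable
  have h1 : FAux K h b - FAux K h a = ∫ v in a..b, K (v / h) / h := by
    unfold FAux
    rw [intervalIntegral.integral_interval_sub_left (hii 0 b) (hii 0 a)]
  rw [h1, ← Real.norm_eq_abs]
  refine (intervalIntegral.norm_integral_le_integral_norm_uIoc (f := fun v => K (v / h) / h)).trans ?_
  calc (∫ v in Set.Ioc (min a b) (max a b), ‖K (v / h) / h‖)
      ≤ ∫ v, ‖K (v / h) / h‖ := setIntegral_le_integral (KhInt hIntK hh).norm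
        (Filter.Eventually.of_forall fun v => norm_nonneg _)
    _ = 1 := by
        rw [show (fun v => ‖K (v / h) / h‖) = fun v => K (v / h) / h from
          funext fun v => by rw [Real.norm_eq_abs, abs_of_nonneg (div_nonneg (hK0 _) hh.le)]]
        exact KhInt1 hIntK hK1 hh

lemma absSum_le (c s : ℝ) (hcs : |s| ≤ |c|) : |c + s| + |c - s| ≤ 2 * |c| := by
  rcases le_or_gt 0 c with hc | hc
  · rw [abs_of_nonneg hc] at hcs ⊢
    have := abs_le.mp hcs
    rw [abs_of_nonneg (by linarith [this.1]), abs_of_nonneg (by linarith [this.2])]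
    ring_nf; rfl
  · rw [abs_of_neg hc] at hcs ⊢
    have := abs_le.mp hcs
    rw [abs_of_nonpos (by linarith [this.2]), abs_of_nonpos (by linarith [this.1])]
    ring_nf; rfl

lemma gAux_secondDiff (hMeas : Measurable K) (hK0 : ∀ t, 0 ≤ K t) (hIntK : Integrable K)
    (hKmom : Integrable (fun t => |t| * K t)) (hh : 0 < h)
    (a s t : ℝ) (hst : |s| ≤ t) :
    gAux K h (a + s) + gAux K h (a - s) - 2 * gAux K h a
      ≤ 2 * t * (FAux K h (a + t) - FAux K h (a - t)) := by
  have hint := absIntAux hMeas hK0 hIntK hKmom hh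
  have ht0 : 0 ≤ t := le_trans (abs_nonneg s) hst
  have h1 : gAux K h (a + s) + gAux K h (a - s) - 2 * gAux K h a
      = ∫ v, ((|a + s - v| + |a - s - v| - 2 * |a - v|) * (K (v / h) / h)) := by
    have : (fun v => (|a + s - v| + |a - s - v| - 2 * |a - v|) * (K (v / h) / h))
        = fun v => (|a + s - v| * (K (v / h) / h) + |a - s - v| * (K (v / h) / h))
          - 2 * (|a - v| * (K (v / h) / h)) := by funext v; ring
    have hA : Integrable (fun v => |a + s - v| * (K (v / h) / h)
        + |a - s - v| * (K (v / h) / h)) volume := (hint _).add (hint _)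
    have hC : Integrable (fun v => 2 * (|a - v| * (K (v / h) / h))) volume :=
      (hint a).const_mul 2
    rw [this, integral_sub hA hC, integral_add (hint _) (hint _), integral_const_mul]
    rfl
  rw [h1]
  have h2 : ∀ v, (|a + s - v| + |a - s - v| - 2 * |a - v|) * (K (v / h) / h)
      ≤ (Set.Icc (a - t) (a + t)).indicator (fun v => 2 * t * (K (v / h) / h)) v := by
    intro v
    have h0 : 0 ≤ K (v / h) / h := div_nonneg (hK0 _) hh.le
    by_cases hv : v ∈ Set.Icc (a - t) (a + t)
    · rw [Set.indicator_of_mem hv]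
      have e1 : |a + s - v| ≤ |a - v| + |s| := by
        calc |a + s - v| = |(a - v) + s| := by ring_nf
          _ ≤ |a - v| + |s| := abs_add_le _ _
      have e2 : |a - s - v| ≤ |a - v| + |s| := by
        calc |a - s - v| = |(a - v) - s| := by ring_nf
          _ ≤ |a - v| + |s| := abs_sub _ _
      nlinarith
    · rw [Set.indicator_of_notMem hv]
      simp only [Set.mem_Icc, not_and_or, not_le] at hv
      have hcv : t < |a - v| := by
        rcases hv with hv | hv
        · rw [abs_of_pos (by linarith)]; linarith
        · rw [abs_of_neg (by linarith)]; linarith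
      have hsv : |s| ≤ |a - v| := le_of_lt (lt_of_le_of_lt hst hcv)
      have := absSum_le (a - v) s hsv
      have e1 : |a + s - v| = |(a - v) + s| := by ring_nf
      have e2 : |a - s - v| = |(a - v) - s| := by ring_nf
      nlinarith
  have hRint : Integrable ((Set.Icc (a - t) (a + t)).indicator
      (fun v => 2 * t * (K (v / h) / h))) volume :=
    ((KhInt hIntK hh).const_mul _).indicator measurableSet_Icc
  have h3 := integral_mono (by
      have : (fun v => (|a + s - v| + |a - s - v| - 2 * |a - v|) * (K (v / h) / h))
          = fun v => (|a + s - v| * (K (v / h) / h) + |a - s - v| * (K (v / h) / h))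
            - 2 * (|a - v| * (K (v / h) / h)) := by funext v; ring
      rw [this]
      have hA : Integrable (fun v => |a + s - v| * (K (v / h) / h)
          + |a - s - v| * (K (v / h) / h)) volume := (hint _).add (hint _)
      exact hA.sub ((hint a).const_mul 2)) hRint h2
  refine h3.trans (le_of_eq ?_)
  rw [integral_indicator measurableSet_Icc, MeasureTheory.integral_Icc_eq_integral_Ioc,
    ← intervalIntegral.integral_of_le (by linarith : a - t ≤ a + t)]
  have hii : ∀ c d : ℝ, IntervalIntegrable (fun v => 2 * t * (K (v / h) / h)) volume c d :=
    fun c d => ((KhInt hIntK hh).const_mul _).intervalIntegrable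
  have h4 : FAux K h (a + t) - FAux K h (a - t) = ∫ v in (a-t)..(a+t), K (v / h) / h := by
    unfold FAux
    rw [intervalIntegral.integral_interval_sub_left ((KhInt hIntK hh).intervalIntegrable)
      ((KhInt hIntK hh).intervalIntegrable)]
  rw [h4, intervalIntegral.integral_const_mul]
/-- population unbiasedness of convoluted rank regression: `β*` is a global
minimizer of `ℒ_h(β) = E[L_h(y - y' - (x - x')ᵀβ)]`, the gradient vanishes at `β*`, and
`ℒ_h` is convex. -/
theorem stmt7 {Ω : Type*} [MeasurableSpace Ω] (μ : Measure Ω) [IsProbabilityMeasure μ]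
    {p : ℕ} (x x' : Ω → EuclideanSpace ℝ (Fin p)) (ε ε' : Ω → ℝ)
    (βstar : EuclideanSpace ℝ (Fin p))
    (hxm : Measurable x) (hx'm : Measurable x')
    (hεm : Measurable ε) (hε'm : Measurable ε')
    (hεindep : IndepFun ε ε' μ) (hεid : IdentDistrib ε ε' μ μ)
    (hindep : IndepFun (fun ω => (x ω, x' ω)) (fun ω => (ε ω, ε' ω)) μ)
    (hpairs : IdentDistrib (fun ω => (x ω, ε ω)) (fun ω => (x' ω, ε' ω)) μ μ)
    (hεint : Integrable ε μ) (hxint : Integrable (fun ω => ‖x ω‖) μ)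
    (hSigmaPD : ∀ v : EuclideanSpace ℝ (Fin p), v ≠ 0 →
      0 < ∫ ω, (⟪x ω - x' ω, v⟫)^2 ∂μ)
    (K : ℝ → ℝ) (hMeas : Measurable K) (hK0 : ∀ t, 0 ≤ K t)
    (hsym : ∀ t, K (-t) = K t) (hIntK : Integrable K) (hK1 : (∫ t, K t) = 1)
    (hKmom : Integrable (fun t => |t| * K t)) (h : ℝ) (hh : 0 < h)
    (y y' : Ω → ℝ)
    (hy : ∀ ω, y ω = ⟪x ω, βstar⟫ + ε ω)
    (hy' : ∀ ω, y' ω = ⟪x' ω, βstar⟫ + ε' ω)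
    (L : EuclideanSpace ℝ (Fin p) → ℝ)
    (hL : ∀ β, L β = ∫ ω, (∫ v, |y ω - y' ω - ⟪x ω - x' ω, β⟫ - v| * (K (v / h) / h)) ∂μ) :
    (∀ β, L βstar ≤ L β) ∧
    HasGradientAt L (0 : EuclideanSpace ℝ (Fin p)) βstar ∧
    ConvexOn ℝ Set.univ L := by
  -- notation
  have hAm : Measurable fun ω => x ω - x' ω := hxm.sub hx'm
  have hem : Measurable fun ω => ε ω - ε' ω := hεm.sub hε'm
  have hg_cont : Continuous (gAux K h) := gAux_cont hMeas hK0 hIntK hK1 hKmom hh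
  have hg_nonneg := gAux_nonneg (K := K) hK0 hh
  have hε'int : Integrable ε' μ := hεid.integrable_iff.mp hεint
  have hx'int : Integrable (fun ω => ‖x' ω‖) μ := by
    have : IdentDistrib (fun ω => ‖x ω‖) (fun ω => ‖x' ω‖) μ μ :=
      hpairs.comp (measurable_fst.norm)
    exact this.integrable_iff.mp hxint
  have hAint : Integrable (fun ω => ‖x ω - x' ω‖) μ := by
    refine Integrable.mono' (hxint.add hx'int) (hAm.norm.aestronglyMeasurable) ?_
    filter_upwards with ω
    simpa using norm_sub_le (x ω) (x' ω)
  -- rewriting L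
  have hL' : ∀ β, L β = ∫ ω, gAux K h ((ε ω - ε' ω) - ⟪x ω - x' ω, β - βstar⟫) ∂μ := by
    intro β
    rw [hL β]
    congr 1
    funext ω
    have harg : y ω - y' ω - ⟪x ω - x' ω, β⟫
        = (ε ω - ε' ω) - ⟪x ω - x' ω, β - βstar⟫ := by
      rw [hy, hy', inner_sub_right, inner_sub_left, inner_sub_left]
      ring
    show (∫ v, |y ω - y' ω - ⟪x ω - x' ω, β⟫ - v| * (K (v / h) / h))
        = gAux K h ((ε ω - ε' ω) - ⟪x ω - x' ω, β - βstar⟫)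
    rw [harg]
    rfl
  -- integrability of the integrand
  have hinner_m : ∀ c : EuclideanSpace ℝ (Fin p),
      Measurable fun ω => (ε ω - ε' ω) - ⟪x ω - x' ω, c⟫ :=
    fun c => hem.sub (hAm.inner measurable_const)
  have hIout : ∀ c : EuclideanSpace ℝ (Fin p),
      Integrable (fun ω => gAux K h ((ε ω - ε' ω) - ⟪x ω - x' ω, c⟫)) μ := by
    intro c
    set M := ∫ v, |v| * (K (v / h) / h) with hM
    refine Integrable.mono'
      (g := fun ω => (|ε ω| + |ε' ω| + ‖x ω‖ * ‖c‖ + ‖x' ω‖ * ‖c‖) + M)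
      ((((hεint.abs.add hε'int.abs).add (hxint.mul_const ‖c‖)).add
        (hx'int.mul_const ‖c‖)).add (integrable_const M))
      (hg_cont.measurable.comp (hinner_m c)).aestronglyMeasurable ?_
    filter_upwards with ω
    rw [Real.norm_eq_abs, abs_of_nonneg (hg_nonneg _)]
    refine (gAux_le hMeas hK0 hIntK hK1 hKmom hh _).trans ?_
    have h1 : |(ε ω - ε' ω) - ⟪x ω - x' ω, c⟫| ≤ |ε ω| + |ε' ω| + ‖x ω‖ * ‖c‖ + ‖x' ω‖ * ‖c‖ := by
      have e1 : |⟪x ω - x' ω, c⟫| ≤ ‖x ω - x' ω‖ * ‖c‖ := abs_real_inner_le_norm _ _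
      have e2 : ‖x ω - x' ω‖ ≤ ‖x ω‖ + ‖x' ω‖ := norm_sub_le _ _
      have e3 : |(ε ω - ε' ω) - ⟪x ω - x' ω, c⟫| ≤ |ε ω - ε' ω| + |⟪x ω - x' ω, c⟫| :=
        abs_sub _ _
      have e4 : |ε ω - ε' ω| ≤ |ε ω| + |ε' ω| := abs_sub _ _
      nlinarith [norm_nonneg c, norm_nonneg (x ω - x' ω)]
    linarith
  -- convexity
  have hconv : ConvexOn ℝ Set.univ L := by
    refine ⟨convex_univ, fun β₁ _ β₂ _ a b ha hb hab => ?_⟩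
    rw [hL', hL', hL', smul_eq_mul, smul_eq_mul]
    have key : ∀ ω, gAux K h ((ε ω - ε' ω) - ⟪x ω - x' ω, (a • β₁ + b • β₂) - βstar⟫)
        ≤ a * gAux K h ((ε ω - ε' ω) - ⟪x ω - x' ω, β₁ - βstar⟫)
          + b * gAux K h ((ε ω - ε' ω) - ⟪x ω - x' ω, β₂ - βstar⟫) := by
      intro ω
      have harg : (ε ω - ε' ω) - ⟪x ω - x' ω, (a • β₁ + b • β₂) - βstar⟫
          = a * ((ε ω - ε' ω) - ⟪x ω - x' ω, β₁ - βstar⟫)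
            + b * ((ε ω - ε' ω) - ⟪x ω - x' ω, β₂ - βstar⟫) := by
        simp only [inner_sub_right, inner_add_right, real_inner_smul_right]
        linear_combination (-(ε ω - ε' ω) - ⟪x ω - x' ω, βstar⟫) * hab
      rw [harg]
      exact gAux_conv hMeas hK0 hIntK hKmom hh _ _ a b ha hb hab
    calc (∫ ω, gAux K h ((ε ω - ε' ω) - ⟪x ω - x' ω, (a • β₁ + b • β₂) - βstar⟫) ∂μ)
        ≤ ∫ ω, (a * gAux K h ((ε ω - ε' ω) - ⟪x ω - x' ω, β₁ - βstar⟫)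
          + b * gAux K h ((ε ω - ε' ω) - ⟪x ω - x' ω, β₂ - βstar⟫)) ∂μ :=
          integral_mono (hIout _) (((hIout _).const_mul a).add ((hIout _).const_mul b)) key
      _ = a * (∫ ω, gAux K h ((ε ω - ε' ω) - ⟪x ω - x' ω, β₁ - βstar⟫) ∂μ)
          + b * ∫ ω, gAux K h ((ε ω - ε' ω) - ⟪x ω - x' ω, β₂ - βstar⟫) ∂μ := by
          rw [integral_add ((hIout _).const_mul a) ((hIout _).const_mul b),
            integral_const_mul, integral_const_mul]
  -- symmetry
  have hsymL : ∀ δ : EuclideanSpace ℝ (Fin p),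
      (∫ ω, gAux K h ((ε ω - ε' ω) - ⟪x ω - x' ω, δ⟫) ∂μ)
        = ∫ ω, gAux K h ((ε ω - ε' ω) + ⟪x ω - x' ω, δ⟫) ∂μ := by
    intro δ
    have hXm : Measurable fun ω => (x ω, x' ω) := hxm.prodMk hx'm
    have hEm : Measurable fun ω => (ε ω, ε' ω) := hεm.prodMk hε'm
    have hEm' : Measurable fun ω => (ε' ω, ε ω) := hε'm.prodMk hεm
    have hmapE : μ.map (fun ω => (ε ω, ε' ω)) = μ.map (fun ω => (ε' ω, ε ω)) := by
      rw [(indepFun_iff_map_prod_eq_prod_map_map hεm.aemeasurable hε'm.aemeasurable).mp hεindep,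
        (indepFun_iff_map_prod_eq_prod_map_map hε'm.aemeasurable hεm.aemeasurable).mp
          hεindep.symm, hεid.map_eq]
    have hindep' : IndepFun (fun ω => (x ω, x' ω)) (fun ω => (ε' ω, ε ω)) μ :=
      hindep.comp measurable_id measurable_swap
    have hjoint : μ.map (fun ω => ((x ω, x' ω), (ε ω, ε' ω)))
        = μ.map (fun ω => ((x ω, x' ω), (ε' ω, ε ω))) := by
      rw [(indepFun_iff_map_prod_eq_prod_map_map hXm.aemeasurable hEm.aemeasurable).mp hindep,
        (indepFun_iff_map_prod_eq_prod_map_map hXm.aemeasurable hEm'.aemeasurable).mp hindep',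
        hmapE]
    have hID : IdentDistrib (fun ω => ((x ω, x' ω), (ε ω, ε' ω)))
        (fun ω => ((x ω, x' ω), (ε' ω, ε ω))) μ μ :=
      ⟨(hXm.prodMk hEm).aemeasurable, (hXm.prodMk hEm').aemeasurable, hjoint⟩
    have hφ : Measurable fun q : (EuclideanSpace ℝ (Fin p) × EuclideanSpace ℝ (Fin p)) × ℝ × ℝ =>
        gAux K h ((q.2.1 - q.2.2) - ⟪q.1.1 - q.1.2, δ⟫) :=
      hg_cont.measurable.comp ((measurable_snd.fst.sub measurable_snd.snd).sub
        ((measurable_fst.fst.sub measurable_fst.snd).inner measurable_const))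
    have heq := (hID.comp hφ).integral_eq
    simp only [Function.comp] at heq
    rw [heq]
    congr 1
    funext ω
    have : (ε' ω - ε ω) - ⟪x ω - x' ω, δ⟫ = -(((ε ω - ε' ω)) + ⟪x ω - x' ω, δ⟫) := by ring
    rw [this, gAux_even hsym]
  -- minimality
  have hmin : ∀ β, L βstar ≤ L β := by
    intro β
    have hβ₂ : L (βstar - (β - βstar)) = L β := by
      rw [hL' (βstar - (β - βstar)), hL' β]
      have harg : ∀ ω : Ω, (ε ω - ε' ω) - ⟪x ω - x' ω, (βstar - (β - βstar)) - βstar⟫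
          = (ε ω - ε' ω) + ⟪x ω - x' ω, β - βstar⟫ := by
        intro ω
        have : (βstar - (β - βstar)) - βstar = -(β - βstar) := by abel
        rw [this, inner_neg_right]
        ring
      calc (∫ ω, gAux K h ((ε ω - ε' ω) - ⟪x ω - x' ω, (βstar - (β - βstar)) - βstar⟫) ∂μ)
          = ∫ ω, gAux K h ((ε ω - ε' ω) + ⟪x ω - x' ω, β - βstar⟫) ∂μ := by
            congr 1; funext ω; rw [harg ω]
        _ = ∫ ω, gAux K h ((ε ω - ε' ω) - ⟪x ω - x' ω, β - βstar⟫) ∂μ := (hsymL _).symm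
    have hmid : (1/2 : ℝ) • β + (1/2 : ℝ) • (βstar - (β - βstar)) = βstar := by module
    have := hconv.2 (Set.mem_univ β) (Set.mem_univ (βstar - (β - βstar)))
      (by norm_num : (0:ℝ) ≤ 1/2) (by norm_num : (0:ℝ) ≤ 1/2) (by norm_num)
    rw [hmid, hβ₂] at this
    simp only [smul_eq_mul] at this
    linarith
  refine ⟨hmin, ?_, hconv⟩
  -- gradient
  rw [hasGradientAt_iff_hasFDerivAt, map_zero, hasFDerivAt_iff_isLittleO_nhds_zero]
  have hFc : Continuous (FAux K h) := FAux_cont hIntK hh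
  set G : ℝ → ℝ := fun t => ∫ ω, ‖x ω - x' ω‖ *
      (FAux K h ((ε ω - ε' ω) + ‖x ω - x' ω‖ * t)
        - FAux K h ((ε ω - ε' ω) - ‖x ω - x' ω‖ * t)) ∂μ with hGdef
  have hGmeas : ∀ t : ℝ, AEStronglyMeasurable (fun ω => ‖x ω - x' ω‖ *
      (FAux K h ((ε ω - ε' ω) + ‖x ω - x' ω‖ * t)
        - FAux K h ((ε ω - ε' ω) - ‖x ω - x' ω‖ * t))) μ := by
    intro t
    exact (hAm.norm.mul ((hFc.measurable.comp (hem.add (hAm.norm.mul_const t))).sub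
      (hFc.measurable.comp (hem.sub (hAm.norm.mul_const t))))).aestronglyMeasurable
  have hGbound : ∀ t : ℝ, ∀ᵐ ω ∂μ, ‖‖x ω - x' ω‖ *
      (FAux K h ((ε ω - ε' ω) + ‖x ω - x' ω‖ * t)
        - FAux K h ((ε ω - ε' ω) - ‖x ω - x' ω‖ * t))‖ ≤ ‖x ω - x' ω‖ := by
    intro t
    filter_upwards with ω
    rw [Real.norm_eq_abs, abs_mul, abs_norm]
    have hb := FAux_bound (K := K) (h := h) hK0 hIntK hK1 hh
      ((ε ω - ε' ω) - ‖x ω - x' ω‖ * t) ((ε ω - ε' ω) + ‖x ω - x' ω‖ * t)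
    nlinarith [norm_nonneg (x ω - x' ω),
      abs_nonneg (FAux K h ((ε ω - ε' ω) + ‖x ω - x' ω‖ * t)
        - FAux K h ((ε ω - ε' ω) - ‖x ω - x' ω‖ * t))]
  have hGtend : Tendsto G (𝓝 0) (𝓝 0) := by
    have hlim : ∀ᵐ ω ∂μ, Tendsto (fun t : ℝ => ‖x ω - x' ω‖ *
        (FAux K h ((ε ω - ε' ω) + ‖x ω - x' ω‖ * t)
          - FAux K h ((ε ω - ε' ω) - ‖x ω - x' ω‖ * t))) (𝓝 0) (𝓝 ((fun _ => (0:ℝ)) ω)) := by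
      filter_upwards with ω
      have hcont : Continuous fun t : ℝ => ‖x ω - x' ω‖ *
          (FAux K h ((ε ω - ε' ω) + ‖x ω - x' ω‖ * t)
            - FAux K h ((ε ω - ε' ω) - ‖x ω - x' ω‖ * t)) :=
        continuous_const.mul ((hFc.comp (continuous_const.add
          (continuous_const.mul continuous_id))).sub (hFc.comp (continuous_const.sub
          (continuous_const.mul continuous_id))))
      have := hcont.tendsto 0
      simpa using this
    have := tendsto_integral_filter_of_dominated_convergence (μ := μ) (l := 𝓝 (0:ℝ))
      (bound := fun ω => ‖x ω - x' ω‖) (f := fun _ => (0:ℝ))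
      (Filter.Eventually.of_forall hGmeas) (Filter.Eventually.of_forall hGbound) hAint hlim
    simpa using this
  simp only [ContinuousLinearMap.zero_apply]
  rw [Asymptotics.isLittleO_iff]
  intro c hc
  have hev : ∀ᶠ δ : EuclideanSpace ℝ (Fin p) in 𝓝 0, G ‖δ‖ < c :=
    (hGtend.comp tendsto_norm_zero).eventually (gt_mem_nhds hc)
  filter_upwards [hev] with δ hδ
  have hmin' : 0 ≤ L (βstar + δ) - L βstar := sub_nonneg.mpr (hmin _)
  have hLp : L (βstar + δ) = ∫ ω, gAux K h ((ε ω - ε' ω) - ⟪x ω - x' ω, δ⟫) ∂μ := by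
    rw [hL' (βstar + δ)]
    congr 1
    funext ω
    rw [add_sub_cancel_left]
  have hL0 : L βstar = ∫ ω, gAux K h (ε ω - ε' ω) ∂μ := by
    rw [hL' βstar]
    congr 1
    funext ω
    rw [sub_self, inner_zero_right, sub_zero]
  have hplus : Integrable (fun ω => gAux K h ((ε ω - ε' ω) + ⟪x ω - x' ω, δ⟫)) μ := by
    have := hIout (-δ)
    simpa [inner_neg_right, sub_neg_eq_add] using this
  have h0int : Integrable (fun ω => gAux K h (ε ω - ε' ω)) μ := by
    have := hIout 0
    simpa [inner_zero_right] using this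
  have key : L (βstar + δ) - L βstar ≤ ‖δ‖ * G ‖δ‖ := by
    have hshape : (fun ω => gAux K h ((ε ω - ε' ω) + ⟪x ω - x' ω, δ⟫)
        + gAux K h ((ε ω - ε' ω) - ⟪x ω - x' ω, δ⟫) - 2 * gAux K h (ε ω - ε' ω))
        = fun ω => (gAux K h ((ε ω - ε' ω) + ⟪x ω - x' ω, δ⟫)
          + gAux K h ((ε ω - ε' ω) - ⟪x ω - x' ω, δ⟫)) - 2 * gAux K h (ε ω - ε' ω) := by
      funext ω; ring
    have hA2 : Integrable (fun ω => gAux K h ((ε ω - ε' ω) + ⟪x ω - x' ω, δ⟫)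
        + gAux K h ((ε ω - ε' ω) - ⟪x ω - x' ω, δ⟫)) μ := hplus.add (hIout δ)
    have hLHSint : Integrable (fun ω => gAux K h ((ε ω - ε' ω) + ⟪x ω - x' ω, δ⟫)
        + gAux K h ((ε ω - ε' ω) - ⟪x ω - x' ω, δ⟫) - 2 * gAux K h (ε ω - ε' ω)) μ := by
      rw [hshape]
      exact hA2.sub (h0int.const_mul 2)
    have htwice : 2 * (L (βstar + δ) - L βstar)
        = ∫ ω, (gAux K h ((ε ω - ε' ω) + ⟪x ω - x' ω, δ⟫)
          + gAux K h ((ε ω - ε' ω) - ⟪x ω - x' ω, δ⟫) - 2 * gAux K h (ε ω - ε' ω)) ∂μ := by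
      rw [hshape, integral_sub hA2 (h0int.const_mul 2), integral_add hplus (hIout δ),
        integral_const_mul, hLp, hL0, ← hsymL δ]
      ring
    have hptw : ∀ ω, gAux K h ((ε ω - ε' ω) + ⟪x ω - x' ω, δ⟫)
        + gAux K h ((ε ω - ε' ω) - ⟪x ω - x' ω, δ⟫) - 2 * gAux K h (ε ω - ε' ω)
        ≤ 2 * ‖δ‖ * (‖x ω - x' ω‖ * (FAux K h ((ε ω - ε' ω) + ‖x ω - x' ω‖ * ‖δ‖)
            - FAux K h ((ε ω - ε' ω) - ‖x ω - x' ω‖ * ‖δ‖))) := by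
      intro ω
      have hstep := gAux_secondDiff hMeas hK0 hIntK hKmom hh (ε ω - ε' ω) (⟪x ω - x' ω, δ⟫)
        (‖x ω - x' ω‖ * ‖δ‖) (by
          calc |⟪x ω - x' ω, δ⟫| ≤ ‖x ω - x' ω‖ * ‖δ‖ := abs_real_inner_le_norm _ _)
      calc gAux K h ((ε ω - ε' ω) + ⟪x ω - x' ω, δ⟫)
          + gAux K h ((ε ω - ε' ω) - ⟪x ω - x' ω, δ⟫) - 2 * gAux K h (ε ω - ε' ω)
          ≤ 2 * (‖x ω - x' ω‖ * ‖δ‖) * (FAux K h ((ε ω - ε' ω) + ‖x ω - x' ω‖ * ‖δ‖)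
            - FAux K h ((ε ω - ε' ω) - ‖x ω - x' ω‖ * ‖δ‖)) := hstep
        _ = 2 * ‖δ‖ * (‖x ω - x' ω‖ * (FAux K h ((ε ω - ε' ω) + ‖x ω - x' ω‖ * ‖δ‖)
            - FAux K h ((ε ω - ε' ω) - ‖x ω - x' ω‖ * ‖δ‖))) := by ring
    have hGint : Integrable (fun ω => ‖x ω - x' ω‖ *
        (FAux K h ((ε ω - ε' ω) + ‖x ω - x' ω‖ * ‖δ‖)
          - FAux K h ((ε ω - ε' ω) - ‖x ω - x' ω‖ * ‖δ‖))) μ :=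
      Integrable.mono' hAint (hGmeas ‖δ‖) (hGbound ‖δ‖)
    have hmono := integral_mono hLHSint (hGint.const_mul (2 * ‖δ‖)) hptw
    rw [← htwice, integral_const_mul] at hmono
    rw [hGdef]
    linarith
  rw [sub_zero, Real.norm_eq_abs, abs_of_nonneg hmin']
  calc L (βstar + δ) - L βstar ≤ ‖δ‖ * G ‖δ‖ := key
    _ ≤ ‖δ‖ * c := mul_le_mul_of_nonneg_left hδ.le (norm_nonneg δ)
    _ = c * ‖δ‖ := mul_comm _ _
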